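/- arXiv:2012.11098 — 2 statements merged into one kernel-verified Lean document; each statement's English description precedes it below -/
import Mathlib

section
/- Let x, q ∈ ℝ^d with ‖q‖ = 1 and x ≠ 0, and set ρ := ⟨x,q⟩/‖x‖. Let D ≥ 1, let Q_1,…,Q_D be i.i.d. N(0,1) random variables and ε_1,…,ε_D be i.i.d. N(0, ‖x‖²(1−ρ²)) random variables, all jointly independent, and set X_i := ⟨x,q⟩·Q_i + ε_i (so each pair (Q_i, X_i) is bivariate normal with means 0, variances 1 and ‖x‖², and correlation ρ). Let Q_(1) := max(Q_1,…,Q_D) be the first order statistic and X_[1] its concomitant. Then E[X_[1]] = ⟨x,q⟩ · E[Q_(1)] and Var[X_[1]] = ‖x‖² + ⟨x,q⟩² · ( Var[Q_(1)] − 1 ). -/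
open MeasureTheory ProbabilityTheory Real
open scoped RealInnerProductSpace
open Set
open scoped NNReal ENNReal

section AuxGaussianMoments

lemma aux_int_sq_exp {a : ℝ} (ha : 0 < a) :
    ∫ x : ℝ, x ^ 2 * rexp (-a⁻¹ * x ^ 2) = √π * a * √a / 2 := by
  have hb : 0 < a⁻¹ := inv_pos.mpr ha
  have h1 : ∫ x : ℝ, x ^ 2 * rexp (-a⁻¹ * x ^ 2)
      = 2 * ∫ x in Ioi (0:ℝ), x ^ 2 * rexp (-a⁻¹ * x ^ 2) := by
    rw [← integral_comp_abs (f := fun x => x ^ 2 * rexp (-a⁻¹ * x ^ 2))]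
    congr 1 with x
    rw [sq_abs]
  have h2 : ∫ x in Ioi (0:ℝ), x ^ 2 * rexp (-a⁻¹ * x ^ 2)
      = (a⁻¹) ^ (-((2:ℝ) + 1) / 2) * (1 / 2) * Gamma (((2:ℝ) + 1) / 2) := by
    rw [← integral_rpow_mul_exp_neg_mul_rpow two_pos (by norm_num : (-1:ℝ) < 2) hb]
    refine setIntegral_congr_fun measurableSet_Ioi (fun x hx => ?_)
    simp [Real.rpow_two]
  have hG : Gamma (((2:ℝ) + 1) / 2) = √π / 2 := by
    have : ((2:ℝ) + 1) / 2 = 1 / 2 + 1 := by norm_num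
    rw [this, Gamma_add_one (by norm_num), Gamma_one_half_eq]
    ring
  have h3 : (a⁻¹ : ℝ) ^ (-((2:ℝ) + 1) / 2) = a * √a := by
    rw [← rpow_neg_one a, ← rpow_mul ha.le]
    have : (-1 : ℝ) * (-((2:ℝ) + 1) / 2) = 1 + 1/2 := by norm_num
    rw [this, rpow_add ha, rpow_one, ← sqrt_eq_rpow]
  rw [h1, h2, hG, h3]
  ring

lemma aux_odd_integral_zero {f : ℝ → ℝ} (h : ∀ x, f (-x) = - f x) :
    ∫ x : ℝ, f x = 0 := by
  have h1 : ∫ x : ℝ, f (-x) = ∫ x : ℝ, f x := integral_neg_eq_self f _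
  have h2 : ∫ x : ℝ, f (-x) = - ∫ x : ℝ, f x := by
    simp_rw [h]
    exact integral_neg f
  linarith

lemma aux_pdf_eq (v : ℝ≥0) :
    gaussianPDFReal 0 v = fun x => (√(2*π*v))⁻¹ * rexp (-(2*(v:ℝ))⁻¹ * x^2) := by
  funext x
  rw [gaussianPDFReal, sub_zero]
  ring_nf

lemma aux_gauss_rep (v : ℝ≥0) (hv : v ≠ 0) :
    gaussianReal 0 v
      = volume.withDensity (fun x => ((Real.toNNReal (gaussianPDFReal 0 v x) : ℝ≥0) : ℝ≥0∞)) := by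
  rw [gaussianReal_of_var_ne_zero 0 hv]
  rfl

lemma aux_integral_gauss (v : ℝ≥0) (hv : v ≠ 0) (g : ℝ → ℝ) :
    ∫ x, g x ∂(gaussianReal 0 v) = ∫ x, gaussianPDFReal 0 v x * g x := by
  rw [aux_gauss_rep v hv,
    integral_withDensity_eq_integral_smul ((measurable_gaussianPDFReal 0 v).real_toNNReal) g]
  congr 1 with x
  rw [NNReal.smul_def, smul_eq_mul, Real.coe_toNNReal _ (gaussianPDFReal_nonneg 0 v x)]

lemma aux_integrable_gauss (v : ℝ≥0) (hv : v ≠ 0) {g : ℝ → ℝ} (hg : Measurable g)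
    (h : Integrable (fun x => g x * gaussianPDFReal 0 v x) volume) :
    Integrable g (gaussianReal 0 v) := by
  rw [gaussianReal_of_var_ne_zero 0 hv]
  rw [integrable_withDensity_iff (measurable_gaussianPDF 0 v)
    (Filter.Eventually.of_forall fun x => ENNReal.ofReal_lt_top)]
  refine h.congr (Filter.Eventually.of_forall fun x => ?_)
  simp only [gaussianPDF_def, ENNReal.toReal_ofReal (gaussianPDFReal_nonneg 0 v x)]

lemma aux_integrable_dirac {f : ℝ → ℝ} (hf : Measurable f) (a : ℝ) :
    Integrable f (Measure.dirac a) := by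
  refine ⟨hf.aestronglyMeasurable, ?_⟩
  simp [HasFiniteIntegral, lintegral_dirac]

lemma aux_vpos {v : ℝ≥0} (hv : v ≠ 0) : 0 < 2*(v:ℝ) := by
  have : 0 < (v:ℝ) := by exact_mod_cast pos_iff_ne_zero.mpr hv
  linarith

lemma aux_gauss_integrable_id (v : ℝ≥0) : Integrable (fun x : ℝ => x) (gaussianReal 0 v) := by
  by_cases hv : v = 0
  · subst hv
    rw [gaussianReal_zero_var]
    exact aux_integrable_dirac measurable_id _
  · have ha := aux_vpos hv
    have hb : 0 < (2*(v:ℝ))⁻¹ := inv_pos.mpr ha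
    apply aux_integrable_gauss v hv measurable_id
    rw [aux_pdf_eq]
    simp only [id_eq]
    have : (fun x : ℝ => x * ((√(2*π*v))⁻¹ * rexp (-(2*(v:ℝ))⁻¹ * x^2)))
        = fun x => (√(2*π*v))⁻¹ * (x * rexp (-(2*(v:ℝ))⁻¹ * x^2)) := by
      funext x; ring
    rw [this]
    exact (integrable_mul_exp_neg_mul_sq hb).const_mul _

lemma aux_gauss_integrable_sq (v : ℝ≥0) : Integrable (fun x : ℝ => x^2) (gaussianReal 0 v) := by
  by_cases hv : v = 0
  · subst hv
    rw [gaussianReal_zero_var]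
    exact aux_integrable_dirac (measurable_id.pow_const 2) _
  · have ha := aux_vpos hv
    have hb : 0 < (2*(v:ℝ))⁻¹ := inv_pos.mpr ha
    apply aux_integrable_gauss v hv (measurable_id.pow_const 2)
    rw [aux_pdf_eq]
    simp only [id_eq]
    have h1 : (fun x : ℝ => x^2 * ((√(2*π*v))⁻¹ * rexp (-(2*(v:ℝ))⁻¹ * x^2)))
        = fun x => (√(2*π*v))⁻¹ * (x^2 * rexp (-(2*(v:ℝ))⁻¹ * x^2)) := by
      funext x; ring
    rw [h1]
    have h2 := integrable_rpow_mul_exp_neg_mul_sq hb (by norm_num : (-1:ℝ) < 2)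
    simp_rw [Real.rpow_two] at h2
    exact h2.const_mul _

lemma aux_gauss_mean (v : ℝ≥0) : ∫ x, x ∂(gaussianReal 0 v) = 0 := by
  by_cases hv : v = 0
  · subst hv
    rw [gaussianReal_zero_var, integral_dirac]
  · rw [aux_integral_gauss v hv]
    apply aux_odd_integral_zero
    intro x
    simp only [aux_pdf_eq, neg_sq]
    ring

lemma aux_gauss_sq (v : ℝ≥0) : ∫ x, x^2 ∂(gaussianReal 0 v) = (v:ℝ) := by
  by_cases hv : v = 0
  · subst hv
    rw [gaussianReal_zero_var, integral_dirac]
    norm_num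
  · have ha := aux_vpos hv
    rw [aux_integral_gauss v hv, aux_pdf_eq]
    have h1 : (fun x : ℝ => ((√(2*π*v))⁻¹ * rexp (-(2*(v:ℝ))⁻¹ * x^2)) * x^2)
        = fun x => (√(2*π*v))⁻¹ * (x^2 * rexp (-(2*(v:ℝ))⁻¹ * x^2)) := by
      funext x; ring
    rw [h1, integral_const_mul, aux_int_sq_exp ha]
    have h2 : 2*π*(v:ℝ) = π * (2*(v:ℝ)) := by ring
    rw [h2, sqrt_mul pi_pos.le]
    have hs : 0 < √(2*(v:ℝ)) := sqrt_pos.mpr ha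
    have hπ : 0 < √π := sqrt_pos.mpr pi_pos
    have hss : √(2*(v:ℝ)) * √(2*(v:ℝ)) = 2*(v:ℝ) := mul_self_sqrt ha.le
    field_simp

end AuxGaussianMoments

section auxtransfer
variable {Ω' : Type*} [MeasurableSpace Ω'] {P : Measure Ω'}

lemma aux_transfer {f : Ω' → ℝ} (hf : Measurable f) {v : ℝ≥0}
    (hlaw : P.map f = gaussianReal 0 v) :
    Integrable f P ∧ (∫ ω, f ω ∂P) = 0 ∧ Integrable (fun ω => f ω ^ 2) P ∧
      (∫ ω, f ω ^ 2 ∂P) = (v : ℝ) := by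
  have hid : AEStronglyMeasurable (fun x : ℝ => x) (P.map f) :=
    measurable_id.aestronglyMeasurable
  have hsqm : AEStronglyMeasurable (fun x : ℝ => x ^ 2) (P.map f) :=
    (measurable_id.pow_const 2).aestronglyMeasurable
  have h1 : Integrable (fun x : ℝ => x) (P.map f) := by
    rw [hlaw]; exact aux_gauss_integrable_id v
  rw [integrable_map_measure hid hf.aemeasurable] at h1
  have h2 : Integrable (fun x : ℝ => x ^ 2) (P.map f) := by
    rw [hlaw]; exact aux_gauss_integrable_sq v
  rw [integrable_map_measure hsqm hf.aemeasurable] at h2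
  have h3 : (∫ ω, f ω ∂P) = 0 := by
    have := integral_map hf.aemeasurable hid
    rw [hlaw, aux_gauss_mean v] at this
    exact this.symm
  have h4 : (∫ ω, f ω ^ 2 ∂P) = (v : ℝ) := by
    have := integral_map hf.aemeasurable hsqm
    rw [hlaw, aux_gauss_sq v] at this
    exact this.symm
  exact ⟨h1, h3, h2, h4⟩
end auxtransfer


/-- Lemma 5 of the paper: moments of the concomitant of the maximum.
With `Qᵢ` i.i.d. `N(0,1)`, independent noise `εᵢ ~ N(0, ‖x‖²(1-ρ²))` where
`ρ = ⟪x,q⟫/‖x‖`, and `Xᵢ = ⟪x,q⟫ Qᵢ + εᵢ`, the concomitant `X_[1]` of the maximum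
`Q_(1)` (selected by an a.s. argmax index `J`) satisfies
`E[X_[1]] = ⟪x,q⟫ E[Q_(1)]` and `Var[X_[1]] = ‖x‖² + ⟪x,q⟫² (Var[Q_(1)] - 1)`. -/
theorem concomitant_of_maximum_mean_variance
    {Ω : Type*} [MeasurableSpace Ω] (P : Measure Ω) [IsProbabilityMeasure P]
    {d : ℕ} (x q : EuclideanSpace ℝ (Fin d)) (hq : ‖q‖ = 1) (hx : x ≠ 0)
    (ρ : ℝ) (hρ : ρ = ⟪x, q⟫ / ‖x‖)
    (D : ℕ) (hD : 1 ≤ D) (Q ε : Fin D → Ω → ℝ)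
    (hQmeas : ∀ i, Measurable (Q i)) (hεmeas : ∀ i, Measurable (ε i))
    (hQlaw : ∀ i, P.map (Q i) = gaussianReal 0 1)
    (hεlaw : ∀ i, P.map (ε i) = gaussianReal 0 (Real.toNNReal (‖x‖ ^ 2 * (1 - ρ ^ 2))))
    (hindep : iIndepFun (Sum.elim Q ε) P)
    (X : Fin D → Ω → ℝ) (hX : ∀ i, X i = fun ω => ⟪x, q⟫ * Q i ω + ε i ω)
    (J : Ω → Fin D) (hJmeas : Measurable J)
    (hJ : ∀ᵐ ω ∂P, ∀ i, Q i ω ≤ Q (J ω) ω) :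
    (∫ ω, X (J ω) ω ∂P) = ⟪x, q⟫ * ∫ ω, Q (J ω) ω ∂P ∧
      variance (fun ω => X (J ω) ω) P
        = ‖x‖ ^ 2 + ⟪x, q⟫ ^ 2 * (variance (fun ω => Q (J ω) ω) P - 1) := by
  classical
  set c : ℝ := ⟪x, q⟫ with hc
  set v : ℝ≥0 := Real.toNNReal (‖x‖ ^ 2 * (1 - ρ ^ 2)) with hvdef
  -- scalar facts
  have hxn : (0:ℝ) < ‖x‖ := norm_pos_iff.mpr hx
  have hcs : |c| ≤ ‖x‖ := by
    have h := abs_real_inner_le_norm x q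
    rwa [hq, mul_one] at h
  have hc2 : c ^ 2 ≤ ‖x‖ ^ 2 := by nlinarith [sq_abs c, abs_nonneg c]
  have hvval : ‖x‖ ^ 2 * (1 - ρ ^ 2) = ‖x‖ ^ 2 - c ^ 2 := by
    rw [hρ]
    field_simp
  have hvcoe : (v : ℝ) = ‖x‖ ^ 2 - c ^ 2 := by
    rw [hvdef, Real.coe_toNNReal _ (by rw [hvval]; linarith), hvval]
  -- per coordinate facts
  have hεF := fun i => aux_transfer (hεmeas i) (hεlaw i)
  have hQF := fun i => aux_transfer (hQmeas i) (hQlaw i)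
  have hεint : ∀ i, Integrable (ε i) P := fun i => (hεF i).1
  have hεmean : ∀ i, (∫ ω, ε i ω ∂P) = 0 := fun i => (hεF i).2.1
  have hε2int : ∀ i, Integrable (fun ω => ε i ω ^ 2) P := fun i => (hεF i).2.2.1
  have hε2val : ∀ i, (∫ ω, ε i ω ^ 2 ∂P) = (v : ℝ) := fun i => (hεF i).2.2.2
  have hQint : ∀ i, Integrable (Q i) P := fun i => (hQF i).1
  have hQ2int : ∀ i, Integrable (fun ω => Q i ω ^ 2) P := fun i => (hQF i).2.2.1
  -- the vector of Q's
  set QQ : Ω → (Fin D → ℝ) := fun ω j => Q j ω with hQQ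
  have hQQmeas : Measurable QQ := measurable_pi_lambda _ fun j => hQmeas j
  have hSmeas : ∀ k : Fin D ⊕ Fin D, Measurable (Sum.elim Q ε k) := by
    rintro (j | j)
    exacts [hQmeas j, hεmeas j]
  have hQQε : ∀ i, IndepFun QQ (ε i) P := by
    intro i
    have h := hindep.indepFun_finset ((Finset.univ : Finset (Fin D)).image Sum.inl)
      {Sum.inr i} (by simp) hSmeas
    have hφ : Measurable (fun y : (((Finset.univ : Finset (Fin D)).image Sum.inl :
          Finset (Fin D ⊕ Fin D)) : Type) → ℝ =>
        fun j : Fin D => y ⟨Sum.inl j, by simp⟩) :=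
      measurable_pi_lambda _ fun j => measurable_pi_apply _
    have hψ : Measurable (fun y : (({Sum.inr i} : Finset (Fin D ⊕ Fin D)) : Type) → ℝ =>
        y ⟨Sum.inr i, by simp⟩) := measurable_pi_apply _
    exact h.comp hφ hψ
  -- no ties
  have hNoTie : ∀ i j : Fin D, i ≠ j → ∀ᵐ ω ∂P, Q i ω ≠ Q j ω := by
    intro i j hij
    have hindQ : IndepFun (Q i) (Q j) P := by
      have := hindep.indepFun (show (Sum.inl i : Fin D ⊕ Fin D) ≠ Sum.inl j by simp [hij])
      exact this
    have hmap : P.map (fun ω => (Q i ω, Q j ω)) = (gaussianReal 0 1).prod (gaussianReal 0 1) := by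
      have h := (indepFun_iff_map_prod_eq_prod_map_map (hQmeas i).aemeasurable
        (hQmeas j).aemeasurable).mp hindQ
      rw [hQlaw i, hQlaw j] at h
      exact h
    have hdiag : MeasurableSet {p : ℝ × ℝ | p.1 = p.2} :=
      measurableSet_eq_fun measurable_fst measurable_snd
    have hzero : P {ω | Q i ω = Q j ω} = 0 := by
      have hpre : {ω | Q i ω = Q j ω}
          = (fun ω => (Q i ω, Q j ω)) ⁻¹' {p : ℝ × ℝ | p.1 = p.2} := rfl
      rw [hpre, ← Measure.map_apply ((hQmeas i).prodMk (hQmeas j)) hdiag, hmap,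
        Measure.prod_apply hdiag]
      have hfib : ∀ a : ℝ, (gaussianReal 0 1) (Prod.mk a ⁻¹' {p : ℝ × ℝ | p.1 = p.2}) = 0 := by
        intro a
        have hset : Prod.mk a ⁻¹' {p : ℝ × ℝ | p.1 = p.2} = {a} := by
          ext b; simp [eq_comm]
        rw [hset]
        exact gaussianReal_absolutelyContinuous 0 one_ne_zero (measure_singleton a)
      calc ∫⁻ a, (gaussianReal 0 1) (Prod.mk a ⁻¹' {p : ℝ × ℝ | p.1 = p.2}) ∂(gaussianReal 0 1)
          = ∫⁻ _, 0 ∂(gaussianReal 0 1) := lintegral_congr fun a => hfib a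
        _ = 0 := lintegral_zero
    rw [ae_iff]
    convert hzero using 2
    simp
  have hae : ∀ᵐ ω ∂P, ∀ j, j ≠ J ω → Q j ω < Q (J ω) ω := by
    have hNT : ∀ᵐ ω ∂P, ∀ i j : Fin D, i ≠ j → Q i ω ≠ Q j ω := by
      rw [ae_all_iff]
      intro i
      rw [ae_all_iff]
      intro j
      by_cases hij : i = j
      · exact Filter.Eventually.of_forall fun ω h => absurd hij h
      · filter_upwards [hNoTie i j hij] with ω h _
        exact h
    filter_upwards [hJ, hNT] with ω h1 h2 j hj
    exact lt_of_le_of_ne (h1 j) (h2 j (J ω) hj)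
  -- the argmax cells
  set C : Fin D → Set (Fin D → ℝ) := fun i => {y | ∀ j, j ≠ i → y j < y i} with hCdef
  have hCmeas : ∀ i, MeasurableSet (C i) := by
    intro i
    have hrw : C i = ⋂ j, {y : Fin D → ℝ | j ≠ i → y j < y i} := by
      ext y; simp [hCdef, Set.mem_iInter]
    rw [hrw]
    refine MeasurableSet.iInter fun j => ?_
    by_cases hji : j = i
    · simp [hji]
    · have : {y : Fin D → ℝ | j ≠ i → y j < y i} = {y | y j < y i} := by
        ext y; simp [hji]
      rw [this]
      exact measurableSet_lt (measurable_pi_apply j) (measurable_pi_apply i)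
  set B : Fin D → Set Ω := fun i => QQ ⁻¹' C i with hBdef
  have hBmeas : ∀ i, MeasurableSet (B i) := fun i => hQQmeas (hCmeas i)
  have hBmem : ∀ i ω, ω ∈ B i ↔ ∀ j, j ≠ i → Q j ω < Q i ω := fun i ω => Iff.rfl
  have hBdisj : ∀ i k, i ≠ k → ∀ ω, ω ∈ B i → ω ∉ B k := by
    intro i k hik ω hi hk
    exact lt_asymm ((hBmem i ω).mp hi k (Ne.symm hik)) (((hBmem k ω).mp hk) i hik)
  -- decomposition
  have hdecomp : ∀ g : Fin D → Ω → ℝ,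
      (fun ω => g (J ω) ω) =ᵐ[P] fun ω => ∑ i, (B i).indicator (g i) ω := by
    intro g
    filter_upwards [hae] with ω hω
    have hmem : ω ∈ B (J ω) := fun j hj => hω j hj
    rw [Finset.sum_eq_single (J ω)]
    · rw [Set.indicator_of_mem hmem]
    · intro i _ hne
      exact Set.indicator_of_notMem (hBdisj (J ω) i (Ne.symm hne) ω hmem) _
    · exact fun h => absurd (Finset.mem_univ _) h
  have hintJ : ∀ g : Fin D → Ω → ℝ, (∀ i, Integrable (g i) P) →
      Integrable (fun ω => g (J ω) ω) P ∧
        (∫ ω, g (J ω) ω ∂P) = ∑ i, ∫ ω, (B i).indicator (g i) ω ∂P := by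
    intro g hg
    have hI : ∀ i ∈ Finset.univ, Integrable ((B i).indicator (g i)) P :=
      fun i _ => (hg i).indicator (hBmeas i)
    have hsum : Integrable (fun ω => ∑ i, (B i).indicator (g i) ω) P :=
      integrable_finset_sum _ hI
    exact ⟨hsum.congr (hdecomp g).symm,
      by rw [integral_congr_ae (hdecomp g), integral_finset_sum _ hI]⟩
  -- the three key integrals
  have hIone : ∀ i, Measurable ((C i).indicator (fun _ => (1:ℝ))) :=
    fun i => measurable_const.indicator (hCmeas i)
  have hIproj : ∀ i, Measurable ((C i).indicator (fun y : Fin D → ℝ => y i)) :=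
    fun i => (measurable_pi_apply i).indicator (hCmeas i)
  have key1 : ∀ i, (∫ ω, (B i).indicator (ε i) ω ∂P) = 0 := by
    intro i
    have heq : (B i).indicator (ε i)
        = fun ω => (C i).indicator (fun _ => (1:ℝ)) (QQ ω) * ε i ω := by
      funext ω
      by_cases hm : ω ∈ B i
      · rw [Set.indicator_of_mem hm, Set.indicator_of_mem (show QQ ω ∈ C i from hm), one_mul]
      · rw [Set.indicator_of_notMem hm, Set.indicator_of_notMem (show QQ ω ∉ C i from hm), zero_mul]
    have hind : IndepFun (fun ω => (C i).indicator (fun _ => (1:ℝ)) (QQ ω)) (ε i) P :=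
      (hQQε i).comp (hIone i) measurable_id
    have h2 : (∫ ω, (C i).indicator (fun _ => (1:ℝ)) (QQ ω) * ε i ω ∂P)
        = (∫ ω, (C i).indicator (fun _ => (1:ℝ)) (QQ ω) ∂P) * ∫ ω, ε i ω ∂P :=
      hind.integral_fun_mul_eq_mul_integral ((hIone i).comp hQQmeas).aestronglyMeasurable
        (hεmeas i).aestronglyMeasurable
    rw [heq, h2, hεmean i, mul_zero]
  have key2 : ∀ i, (∫ ω, (B i).indicator (fun ω' => ε i ω' ^ 2) ω ∂P)
      = (∫ ω, (B i).indicator (fun _ => (1:ℝ)) ω ∂P) * (v : ℝ) := by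
    intro i
    have heq : (B i).indicator (fun ω' => ε i ω' ^ 2)
        = fun ω => (C i).indicator (fun _ => (1:ℝ)) (QQ ω) * ε i ω ^ 2 := by
      funext ω
      by_cases hm : ω ∈ B i
      · rw [Set.indicator_of_mem hm, Set.indicator_of_mem (show QQ ω ∈ C i from hm), one_mul]
      · rw [Set.indicator_of_notMem hm, Set.indicator_of_notMem (show QQ ω ∉ C i from hm), zero_mul]
    have heq1 : (B i).indicator (fun _ => (1:ℝ))
        = fun ω => (C i).indicator (fun _ => (1:ℝ)) (QQ ω) := by
      funext ω
      by_cases hm : ω ∈ B i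
      · rw [Set.indicator_of_mem hm, Set.indicator_of_mem (show QQ ω ∈ C i from hm)]
      · rw [Set.indicator_of_notMem hm, Set.indicator_of_notMem (show QQ ω ∉ C i from hm)]
    have hind : IndepFun (fun ω => (C i).indicator (fun _ => (1:ℝ)) (QQ ω))
        (fun ω => ε i ω ^ 2) P :=
      (hQQε i).comp (hIone i) (measurable_id.pow_const 2)
    have h2 : (∫ ω, (C i).indicator (fun _ => (1:ℝ)) (QQ ω) * ε i ω ^ 2 ∂P)
        = (∫ ω, (C i).indicator (fun _ => (1:ℝ)) (QQ ω) ∂P) * ∫ ω, ε i ω ^ 2 ∂P :=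
      hind.integral_fun_mul_eq_mul_integral ((hIone i).comp hQQmeas).aestronglyMeasurable
        ((hεmeas i).pow_const 2).aestronglyMeasurable
    rw [heq, h2, hε2val i, heq1]
  have key3 : ∀ i, (∫ ω, (B i).indicator (fun ω' => Q i ω' * ε i ω') ω ∂P) = 0 := by
    intro i
    have heq : (B i).indicator (fun ω' => Q i ω' * ε i ω')
        = fun ω => (C i).indicator (fun y : Fin D → ℝ => y i) (QQ ω) * ε i ω := by
      funext ω
      by_cases hm : ω ∈ B i
      · rw [Set.indicator_of_mem hm, Set.indicator_of_mem (show QQ ω ∈ C i from hm)]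
      · rw [Set.indicator_of_notMem hm, Set.indicator_of_notMem (show QQ ω ∉ C i from hm), zero_mul]
    have hind : IndepFun (fun ω => (C i).indicator (fun y : Fin D → ℝ => y i) (QQ ω)) (ε i) P :=
      (hQQε i).comp (hIproj i) measurable_id
    have h2 : (∫ ω, (C i).indicator (fun y : Fin D → ℝ => y i) (QQ ω) * ε i ω ∂P)
        = (∫ ω, (C i).indicator (fun y : Fin D → ℝ => y i) (QQ ω) ∂P) * ∫ ω, ε i ω ∂P :=
      hind.integral_fun_mul_eq_mul_integral ((hIproj i).comp hQQmeas).aestronglyMeasurable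
        (hεmeas i).aestronglyMeasurable
    rw [heq, h2, hεmean i, mul_zero]
  have hP1 : (∑ i, ∫ ω, (B i).indicator (fun _ => (1:ℝ)) ω ∂P) = 1 := by
    have h := (hintJ (fun _ _ => (1:ℝ)) fun i => integrable_const 1).2
    rw [integral_const] at h
    simp only [probReal_univ, smul_eq_mul, one_mul] at h
    exact h.symm
  -- integrability of all J-compositions
  obtain ⟨hQJint, -⟩ := hintJ Q hQint
  obtain ⟨hεJint, hεJeq⟩ := hintJ ε hεint
  have hεJ0 : (∫ ω, ε (J ω) ω ∂P) = 0 := by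
    rw [hεJeq]
    simp [key1]
  obtain ⟨hε2Jint, hε2Jeq⟩ := hintJ (fun i ω => ε i ω ^ 2) hε2int
  have hε2J : (∫ ω, ε (J ω) ω ^ 2 ∂P) = (v : ℝ) := by
    rw [hε2Jeq]
    simp_rw [key2]
    rw [← Finset.sum_mul, hP1, one_mul]
  have hQεint : ∀ i, Integrable (fun ω => Q i ω * ε i ω) P := by
    intro i
    have hind : IndepFun (Q i) (ε i) P := by
      have := hindep.indepFun (show (Sum.inl i : Fin D ⊕ Fin D) ≠ Sum.inr i by simp)
      exact this
    exact hind.integrable_mul (hQint i) (hεint i)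
  obtain ⟨hQεJint, hQεJeq⟩ := hintJ (fun i ω => Q i ω * ε i ω) hQεint
  have hQεJ0 : (∫ ω, Q (J ω) ω * ε (J ω) ω ∂P) = 0 := by
    rw [hQεJeq]
    simp [key3]
  obtain ⟨hQ2Jint, -⟩ := hintJ (fun i ω => Q i ω ^ 2) hQ2int
  -- measurability of J-compositions
  have hFQmeas : Measurable (fun p : Ω × Fin D => Q p.2 p.1) :=
    measurable_from_prod_countable_left fun i => hQmeas i
  have hQJmeas : Measurable (fun ω => Q (J ω) ω) :=
    hFQmeas.comp (measurable_id.prodMk hJmeas)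
  have hFεmeas : Measurable (fun p : Ω × Fin D => ε p.2 p.1) :=
    measurable_from_prod_countable_left fun i => hεmeas i
  have hεJmeas : Measurable (fun ω => ε (J ω) ω) :=
    hFεmeas.comp (measurable_id.prodMk hJmeas)
  -- mean
  have hXJ : (fun ω => X (J ω) ω) = fun ω => c * Q (J ω) ω + ε (J ω) ω := by
    funext ω
    rw [hX (J ω)]
  have hmean : (∫ ω, X (J ω) ω ∂P) = c * ∫ ω, Q (J ω) ω ∂P := by
    rw [hXJ, integral_add (hQJint.const_mul c) hεJint, integral_const_mul, hεJ0, add_zero]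
  refine ⟨hmean, ?_⟩
  -- variance
  have hexp : (fun ω => (c * Q (J ω) ω + ε (J ω) ω) ^ 2)
      = fun ω => c ^ 2 * Q (J ω) ω ^ 2 + (2 * c) * (Q (J ω) ω * ε (J ω) ω)
          + ε (J ω) ω ^ 2 := by
    funext ω
    ring
  have hXJ2 : (fun ω => X (J ω) ω ^ 2)
      = fun ω => c ^ 2 * Q (J ω) ω ^ 2 + (2 * c) * (Q (J ω) ω * ε (J ω) ω)
          + ε (J ω) ω ^ 2 := by
    funext ω
    rw [hX (J ω)]
    ring
  have hX2int : Integrable (fun ω => X (J ω) ω ^ 2) P := by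
    rw [hXJ2]
    exact ((hQ2Jint.const_mul _).add (hQεJint.const_mul _)).add hε2Jint
  have hX2val : (∫ ω, X (J ω) ω ^ 2 ∂P)
      = c ^ 2 * (∫ ω, Q (J ω) ω ^ 2 ∂P) + (v : ℝ) := by
    have e1 : Integrable (fun ω => c ^ 2 * Q (J ω) ω ^ 2) P := hQ2Jint.const_mul _
    have e2 : Integrable (fun ω => (2 * c) * (Q (J ω) ω * ε (J ω) ω)) P := hQεJint.const_mul _
    have e12 : Integrable (fun ω => c ^ 2 * Q (J ω) ω ^ 2
        + (2 * c) * (Q (J ω) ω * ε (J ω) ω)) P := e1.add e2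
    rw [hXJ2, integral_add e12 hε2Jint, integral_add e1 e2,
      integral_const_mul, integral_const_mul, hQεJ0, hε2J]
    ring
  have hQJmem : MemLp (fun ω => Q (J ω) ω) 2 P :=
    (memLp_two_iff_integrable_sq hQJmeas.aestronglyMeasurable).mpr hQ2Jint
  have hXJmeas : Measurable (fun ω => X (J ω) ω) := by
    rw [hXJ]
    exact (hQJmeas.const_mul c).add hεJmeas
  have hXJmem : MemLp (fun ω => X (J ω) ω) 2 P :=
    (memLp_two_iff_integrable_sq hXJmeas.aestronglyMeasurable).mpr hX2int
  have hvarQ : variance (fun ω => Q (J ω) ω) P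
      = (∫ ω, Q (J ω) ω ^ 2 ∂P) - (∫ ω, Q (J ω) ω ∂P) ^ 2 := by
    rw [variance_eq_sub hQJmem]
    simp [Pi.pow_apply]
  have hvarX : variance (fun ω => X (J ω) ω) P
      = (∫ ω, X (J ω) ω ^ 2 ∂P) - (∫ ω, X (J ω) ω ∂P) ^ 2 := by
    rw [variance_eq_sub hXJmem]
    simp [Pi.pow_apply]
  rw [hvarX, hX2val, hmean, hvarQ, hvcoe]
  ring
end

section
/- Let r and ε be positive reals with (1+ε)·r < 2, set τ_1 := 1 − r²/2, τ_2 := 1 − (1+ε)²·r²/2, and let α := (τ_1 − τ_2)/( √(1 − τ_1²) + √(1 − τ_2²) ). Then ε / √(4/r² − 1) ≤ α ≤ ε / √(4/r² − (1+ε)²). -/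
open Real

/-- two-sided bound `α = Θ(ε)` for the gap parameter in the
`(1+ε)`-approximate near neighbor problem on the unit sphere: with
`τ₁ = 1 - r²/2`, `τ₂ = 1 - (1+ε)² r²/2` and
`α = (τ₁ - τ₂)/(√(1-τ₁²) + √(1-τ₂²))`, one has
`ε/√(4/r² - 1) ≤ α ≤ ε/√(4/r² - (1+ε)²)`. -/
theorem gap_parameter_two_sided_bound
    (r ε : ℝ) (hr : 0 < r) (hε : 0 < ε) (h : (1 + ε) * r < 2)
    (τ₁ τ₂ α : ℝ) (hτ₁ : τ₁ = 1 - r ^ 2 / 2) (hτ₂ : τ₂ = 1 - (1 + ε) ^ 2 * r ^ 2 / 2)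
    (hα : α = (τ₁ - τ₂) / (Real.sqrt (1 - τ₁ ^ 2) + Real.sqrt (1 - τ₂ ^ 2))) :
    ε / Real.sqrt (4 / r ^ 2 - 1) ≤ α ∧
      α ≤ ε / Real.sqrt (4 / r ^ 2 - (1 + ε) ^ 2) := by
  have hε1 : (0:ℝ) < 1 + ε := by linarith
  have hs : 0 < (1 + ε) * r := mul_pos hε1 hr
  have hrlt : r < 2 := by nlinarith
  have hr2 : r ^ 2 < 4 := by nlinarith
  have hs2 : ((1 + ε) * r) ^ 2 < 4 := by nlinarith
  set A := Real.sqrt (4 - r ^ 2) with hAdef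
  set B := Real.sqrt (4 - ((1 + ε) * r) ^ 2) with hBdef
  have hA : 0 < A := Real.sqrt_pos.mpr (by linarith)
  have hB : 0 < B := Real.sqrt_pos.mpr (by linarith)
  have hBA : B ≤ A := Real.sqrt_le_sqrt (by nlinarith [mul_nonneg hε.le (sq_nonneg r), mul_nonneg (mul_nonneg hε.le hε.le) (sq_nonneg r)])
  have h1 : Real.sqrt (1 - τ₁ ^ 2) = r / 2 * A := by
    rw [hτ₁, show 1 - (1 - r ^ 2 / 2) ^ 2 = (r / 2) ^ 2 * (4 - r ^ 2) by ring,
      Real.sqrt_mul (by positivity), Real.sqrt_sq (by positivity)]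
  have h2 : Real.sqrt (1 - τ₂ ^ 2) = (1 + ε) * r / 2 * B := by
    rw [hτ₂, show 1 - (1 - (1 + ε) ^ 2 * r ^ 2 / 2) ^ 2
        = ((1 + ε) * r / 2) ^ 2 * (4 - ((1 + ε) * r) ^ 2) by ring,
      Real.sqrt_mul (by positivity), Real.sqrt_sq (by positivity)]
  have hden : 0 < A + (1 + ε) * B := by nlinarith [mul_pos hε1 hB]
  have hden' : 0 < r / 2 * A + (1 + ε) * r / 2 * B := by nlinarith [mul_pos hε1 hB, mul_pos hr hA]
  have hαval : α = ε * (2 + ε) * r / (A + (1 + ε) * B) := by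
    rw [hα, h1, h2, hτ₁, hτ₂, div_eq_div_iff hden'.ne' hden.ne']
    ring
  have hL : Real.sqrt (4 / r ^ 2 - 1) = A / r := by
    rw [show 4 / r ^ 2 - 1 = (4 - r ^ 2) / r ^ 2 by field_simp,
      Real.sqrt_div (by linarith), Real.sqrt_sq hr.le]
  have hU : Real.sqrt (4 / r ^ 2 - (1 + ε) ^ 2) = B / r := by
    rw [show 4 / r ^ 2 - (1 + ε) ^ 2 = (4 - ((1 + ε) * r) ^ 2) / r ^ 2 by field_simp,
      Real.sqrt_div (by linarith), Real.sqrt_sq hr.le]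
  clear_value A B
  constructor
  · rw [hL, hαval, div_div_eq_mul_div, div_le_div_iff₀ hA hden]
    have key : ε * (2 + ε) * r * A - ε * r * (A + (1 + ε) * B)
        = ε * r * (1 + ε) * (A - B) := by ring
    linarith [key, mul_nonneg (mul_nonneg (mul_nonneg hε.le hr.le) hε1.le)
      (sub_nonneg.mpr hBA)]
  · rw [hU, hαval, div_div_eq_mul_div, div_le_div_iff₀ hden hB]
    have key : ε * r * (A + (1 + ε) * B) - ε * (2 + ε) * r * B
        = ε * r * (A - B) := by ring
    linarith [key, mul_nonneg (mul_nonneg hε.le hr.le) (sub_nonneg.mpr hBA)]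
end
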